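/- For points in 2D rank space on [n] × [n], the slab-rank map is a bijection: given a horizontal slab consisting of the points with y-coordinates in an interval J of size k, the map sending a point (i, j) of the slab to (i', j') — where j' = j − min(J) and i' is the number of slab points with x-coordinate strictly less than i — is a bijection from the slab's point set onto a point set in rank space on [k] × [k] (i.e., the images have x-coordinates exactly {0,...,k−1} and y-coordinates a permutation of {0,...,k−1}), and it preserves the relative order of both coordinates. -/
import Mathlib


/-- The slab-rank map is a bijection onto rank space: for points in rank space
on `[n] × [n]`, a horizontal slab of height `k` (points with `y`-coordinates in
`[j₀, j₀ + k)`) contains exactly `k` points, and the map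
`(i, j) ↦ (#{slab points with x < i}, j − j₀)` is injective on the slab, its
image has `x`-coordinates exactly `{0, …, k−1}` and `y`-coordinates exactly
`{0, …, k−1}`, and it preserves the relative order of both coordinates. -/
theorem slab_rank_bijection (n k j₀ : ℕ) (S : Finset (ℕ × ℕ))
    (hcard : S.card = n)
    (hx : S.image Prod.fst = Finset.range n)
    (hy : S.image Prod.snd = Finset.range n)
    (hjk : j₀ + k ≤ n) :
    ∀ slab : Finset (ℕ × ℕ), slab = S.filter (fun p => j₀ ≤ p.2 ∧ p.2 < j₀ + k) →
    ∀ φ : ℕ × ℕ → ℕ × ℕ,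
      (∀ p, φ p = ((slab.filter (fun s => s.1 < p.1)).card, p.2 - j₀)) →
      slab.card = k ∧
      Set.InjOn φ ↑slab ∧
      (slab.image φ).image Prod.fst = Finset.range k ∧
      (slab.image φ).image Prod.snd = Finset.range k ∧
      ∀ p ∈ slab, ∀ q ∈ slab,
        (p.1 < q.1 ↔ (φ p).1 < (φ q).1) ∧ (p.2 < q.2 ↔ (φ p).2 < (φ q).2) := by
  intro slab hslab φ hφ
  have hfst : Set.InjOn Prod.fst (S : Set (ℕ × ℕ)) := by
    exact Finset.injOn_of_card_image_eq (by rw [hx, Finset.card_range, hcard])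
  have hsnd : Set.InjOn Prod.snd (S : Set (ℕ × ℕ)) := by
    exact Finset.injOn_of_card_image_eq (by rw [hy, Finset.card_range, hcard])
  have hsub : slab ⊆ S := by rw [hslab]; exact Finset.filter_subset _ _
  have hsubc : (↑slab : Set (ℕ × ℕ)) ⊆ ↑S := Finset.coe_subset.2 hsub
  have hmem : ∀ p, p ∈ slab ↔ p ∈ S ∧ j₀ ≤ p.2 ∧ p.2 < j₀ + k := by
    intro p; rw [hslab, Finset.mem_filter]
  have himg : slab.image Prod.snd = Finset.Ico j₀ (j₀ + k) := by
    ext j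
    simp only [Finset.mem_image, Finset.mem_Ico]
    constructor
    · rintro ⟨p, hp, rfl⟩
      exact ((hmem p).1 hp).2
    · rintro ⟨h1, h2⟩
      have hj : j ∈ S.image Prod.snd := by
        rw [hy]; exact Finset.mem_range.2 (lt_of_lt_of_le h2 hjk)
      obtain ⟨p, hp, rfl⟩ := Finset.mem_image.1 hj
      exact ⟨p, (hmem p).2 ⟨hp, h1, h2⟩, rfl⟩
  have hcardslab : slab.card = k := by
    have h1 := Finset.card_image_of_injOn (hsnd.mono hsubc)
    rw [himg, Nat.card_Ico] at h1
    omega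
  -- order preservation in x
  have hmono : ∀ p ∈ slab, ∀ q : ℕ × ℕ, p.1 < q.1 →
      (slab.filter (fun s => s.1 < p.1)).card < (slab.filter (fun s => s.1 < q.1)).card := by
    intro p hp q hpq
    apply Finset.card_lt_card
    constructor
    · intro s hs
      rw [Finset.mem_filter] at hs ⊢
      exact ⟨hs.1, hs.2.trans hpq⟩
    · intro hc
      have := hc (Finset.mem_filter.2 ⟨hp, hpq⟩)
      rw [Finset.mem_filter] at this
      omega
  have hanti : ∀ p q : ℕ × ℕ, q.1 ≤ p.1 →
      (slab.filter (fun s => s.1 < q.1)).card ≤ (slab.filter (fun s => s.1 < p.1)).card := by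
    intro p q hpq
    apply Finset.card_le_card
    intro s hs
    rw [Finset.mem_filter] at hs ⊢
    exact ⟨hs.1, lt_of_lt_of_le hs.2 hpq⟩
  have hordx : ∀ p ∈ slab, ∀ q : ℕ × ℕ,
      (p.1 < q.1 ↔ (φ p).1 < (φ q).1) := by
    intro p hp q
    rw [hφ p, hφ q]
    constructor
    · exact hmono p hp q
    · intro h
      by_contra hc
      push_neg at hc
      exact absurd (hanti p q hc) (by omega)
  -- injectivity
  have hinj : Set.InjOn φ ↑slab := by
    intro p hp q hq hpq
    rw [Finset.mem_coe] at hp hq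
    have hx1 : p.1 = q.1 := by
      by_contra hne
      rcases Nat.lt_or_ge p.1 q.1 with h | h
      · have := (hordx p hp q).1 h
        rw [hpq] at this; omega
      · rcases Nat.lt_or_ge q.1 p.1 with h' | h'
        · have := (hordx q hq p).1 h'
          rw [hpq] at this; omega
        · omega
    exact hfst (hsubc hp) (hsubc hq) hx1
  refine ⟨hcardslab, hinj, ?_, ?_, ?_⟩
  · -- x image = range k
    have heq : (slab.image φ).image Prod.fst
        = slab.image (fun p => (slab.filter (fun s => s.1 < p.1)).card) := by
      rw [Finset.image_image]
      apply Finset.image_congr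
      intro p _
      simp [hφ p]
    rw [heq]
    apply Finset.eq_of_subset_of_card_le
    · intro i hi
      obtain ⟨p, hp, rfl⟩ := Finset.mem_image.1 hi
      rw [Finset.mem_range, ← hcardslab]
      apply Finset.card_lt_card
      constructor
      · exact Finset.filter_subset _ _
      · intro hc
        have := hc hp
        rw [Finset.mem_filter] at this
        omega
    · rw [Finset.card_range, ← hcardslab]
      apply le_of_eq
      symm
      apply Finset.card_image_of_injOn
      intro p hp q hq h
      rw [Finset.mem_coe] at hp hq
      have hx1 : p.1 = q.1 := by
        by_contra hne
        rcases Nat.lt_or_ge p.1 q.1 with hlt | hge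
        · exact absurd h (Nat.ne_of_lt (hmono p hp q hlt))
        · rcases Nat.lt_or_ge q.1 p.1 with hlt' | _
          · exact absurd h.symm (Nat.ne_of_lt (hmono q hq p hlt'))
          · omega
      exact hfst (hsubc hp) (hsubc hq) hx1
  · -- y image = range k
    have heq : (slab.image φ).image Prod.snd = (slab.image Prod.snd).image (fun j => j - j₀) := by
      rw [Finset.image_image, Finset.image_image]
      apply Finset.image_congr
      intro p _
      simp [hφ p]
    rw [heq, himg]
    ext j
    simp only [Finset.mem_image, Finset.mem_Ico, Finset.mem_range]
    constructor
    · rintro ⟨m, ⟨h1, h2⟩, rfl⟩; omega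
    · intro hj; exact ⟨j + j₀, by omega, by omega⟩
  · -- order preservation
    intro p hp q hq
    refine ⟨hordx p hp q, ?_⟩
    rw [hφ p, hφ q]
    have h1 := ((hmem p).1 hp).2
    have h2 := ((hmem q).1 hq).2
    simp only
    omega
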